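/- Let H be an n×n Hermitian complex matrix and U(t) := exp(itH). Let S : ℝ → M_n(ℂ) be continuously differentiable with S(t) unitary for every t and S(0) = 1, and define A(t) := S(t)* H S(t) − i (d/dt S(t)*) S(t). Then for every t ≥ 0, ‖S(t)* U(t) − 1‖ ≤ ∫₀ᵗ ‖A(s)‖ ds. -/

import Mathlib

open scoped Matrix.Norms.L2Operator
open Matrix

/-- `U t = exp(itH)`. -/
noncomputable def timeEvol {n : ℕ} (H : Matrix (Fin n) (Fin n) ℂ) (t : ℝ) :
    Matrix (Fin n) (Fin n) ℂ :=
  NormedSpace.exp ((Complex.I * (t : ℂ)) • H)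

section aux
variable {n : ℕ} (H : Matrix (Fin n) (Fin n) ℂ)

lemma timeEvol_eq (t : ℝ) :
    timeEvol H t = NormedSpace.exp ((t : ℂ) • (Complex.I • H)) := by
  rw [timeEvol, smul_smul, mul_comm]

lemma hasDerivAt_timeEvol (t : ℝ) :
    HasDerivAt (timeEvol H) (timeEvol H t * (Complex.I • H)) t := by
  have h := hasDerivAt_exp_smul_const (𝕂 := ℂ) (Complex.I • H) (t : ℂ)
  have h2 := HasDerivAt.scomp (𝕜 := ℝ) (𝕜' := ℂ) t h (Complex.ofRealCLM.hasDerivAt)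
  simp only [Complex.ofRealCLM_apply, Function.comp_def, Complex.ofReal_one, one_smul] at h2
  have he : timeEvol H = fun x : ℝ => NormedSpace.exp ((x:ℂ) • (Complex.I • H)) :=
    funext (timeEvol_eq H)
  rw [he]
  exact h2
lemma timeEvol_unitary (hH : Hᴴ = H) (t : ℝ) :
    (timeEvol H t)ᴴ * timeEvol H t = 1 := by
  rw [timeEvol, ← Matrix.exp_conjTranspose]
  have h : ((Complex.I * (t : ℂ)) • H)ᴴ = -((Complex.I * (t : ℂ)) • H) := by
    rw [Matrix.conjTranspose_smul, hH, ← neg_smul]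
    congr 1
    simp [Complex.ext_iff]
  rw [h]
  have h2 := Matrix.exp_add_of_commute (-((Complex.I * (t : ℂ)) • H))
    ((Complex.I * (t : ℂ)) • H) (Commute.neg_left rfl)
  rw [neg_add_cancel, NormedSpace.exp_zero] at h2
  exact h2.symm

lemma norm_one_le_one : ‖(1 : Matrix (Fin n) (Fin n) ℂ)‖ ≤ 1 := by
  rw [Matrix.cstar_norm_def, _root_.map_one, ContinuousLinearMap.one_def]
  exact ContinuousLinearMap.norm_id_le

lemma norm_le_one_of_unitary (W : Matrix (Fin n) (Fin n) ℂ) (hW : Wᴴ * W = 1) :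
    ‖W‖ ≤ 1 := by
  nlinarith [Matrix.l2_opNorm_conjTranspose_mul_self W, hW ▸ norm_one_le_one (n := n),
    norm_nonneg W]

lemma timeEvol_commute (t : ℝ) :
    timeEvol H t * (Complex.I • H) = (Complex.I • H) * timeEvol H t := by
  have h : Commute ((Complex.I * (t : ℂ)) • H) (Complex.I • H) :=
    ((Commute.refl H).smul_right _).smul_left _
  exact h.exp_left.eq

lemma timeEvol_zero : timeEvol H 0 = 1 := by
  simp [timeEvol, NormedSpace.exp_zero]

end aux


/-- if `S` is continuously differentiable, unitary valued, `S 0 = 1`, and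
`A t = S tᴴ * H * S t - i (d/dt S tᴴ) * S t`, then for `t ≥ 0`,
`‖S tᴴ * U t - 1‖ ≤ ∫₀ᵗ ‖A s‖ ds`. -/
theorem stmt1 {n : ℕ} (H : Matrix (Fin n) (Fin n) ℂ) (hH : Hᴴ = H)
    (S S' : ℝ → Matrix (Fin n) (Fin n) ℂ)
    (hS : ∀ t, HasDerivAt S (S' t) t) (hS'cont : Continuous S')
    (hSunit : ∀ t, (S t)ᴴ * S t = 1) (hS0 : S 0 = 1)
    (A : ℝ → Matrix (Fin n) (Fin n) ℂ)
    (hA : A = fun t => (S t)ᴴ * H * S t - Complex.I • ((S' t)ᴴ * S t)) :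
    ∀ t : ℝ, 0 ≤ t →
      ‖(S t)ᴴ * timeEvol H t - 1‖ ≤ ∫ s in (0:ℝ)..t, ‖A s‖ := by
  intro t ht
  set U : ℝ → Matrix (Fin n) (Fin n) ℂ := timeEvol H with hU
  set W : ℝ → Matrix (Fin n) (Fin n) ℂ := fun s => (S s)ᴴ * U s with hWdef
  have hSS' : ∀ s, S s * (S s)ᴴ = 1 := fun s => mul_eq_one_comm.mp (hSunit s)
  have hstar : ∀ s, HasDerivAt (fun u => (S u)ᴴ) ((S' s)ᴴ) s := by
    intro s
    simpa only [Matrix.star_eq_conjTranspose] using (hS s).star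
  have hW : ∀ s, HasDerivAt W (Complex.I • (A s * W s)) s := by
    intro s
    have hd := (hstar s).mul (hasDerivAt_timeEvol H s)
    have h1 : (S s)ᴴ * H * S s * ((S s)ᴴ * U s) = (S s)ᴴ * (H * U s) := by
      rw [mul_assoc ((S s)ᴴ * H) (S s), ← mul_assoc (S s), hSS' s, one_mul, mul_assoc]
    have h2 : (S' s)ᴴ * S s * ((S s)ᴴ * U s) = (S' s)ᴴ * U s := by
      rw [mul_assoc, ← mul_assoc (S s), hSS' s, one_mul]
    have key : Complex.I • (A s * W s) = (S' s)ᴴ * U s + (S s)ᴴ * (U s * (Complex.I • H)) := by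
      rw [hA, hU, timeEvol_commute]
      simp only [hWdef, sub_mul, smul_mul_assoc, smul_sub, h1, h2, smul_smul,
        Complex.I_mul_I, neg_one_smul, sub_neg_eq_add, mul_smul_comm, add_comm]
      rfl
    rw [key]
    exact hd
  -- continuity
  have hScont : Continuous S := continuous_iff_continuousAt.mpr fun s => (hS s).continuousAt
  have hUcont : Continuous U := continuous_iff_continuousAt.mpr
    fun s => (hasDerivAt_timeEvol H s).continuousAt
  have hstarcont : ∀ f : ℝ → Matrix (Fin n) (Fin n) ℂ, Continuous f →
      Continuous fun s => (f s)ᴴ := by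
    intro f hf
    simpa only [Matrix.star_eq_conjTranspose] using hf.star
  have hWcont : Continuous W := (hstarcont S hScont).mul hUcont
  have hAcont : Continuous A := by
    rw [hA]
    exact (((hstarcont S hScont).mul continuous_const).mul hScont).sub
      (((hstarcont S' hS'cont).mul hScont).const_smul Complex.I)
  have hW'cont : Continuous fun s => Complex.I • (A s * W s) :=
    (hAcont.mul hWcont).const_smul Complex.I
  -- FTC
  have hFTC := intervalIntegral.integral_eq_sub_of_hasDerivAt (f := W) (a := 0) (b := t)
    (fun s _ => hW s) ((hW'cont).intervalIntegrable 0 t)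
  have hW0 : W 0 = 1 := by
    simp [hWdef, hS0, hU, timeEvol_zero]
  -- norm bound
  have hWnorm : ∀ s, ‖W s‖ ≤ 1 := by
    intro s
    refine norm_le_one_of_unitary _ ?_
    show ((S s)ᴴ * U s)ᴴ * ((S s)ᴴ * U s) = 1
    rw [Matrix.conjTranspose_mul, Matrix.conjTranspose_conjTranspose, mul_assoc,
      ← mul_assoc (S s), hSS' s, one_mul]
    exact timeEvol_unitary H hH s
  have hbound : ∀ s, ‖Complex.I • (A s * W s)‖ ≤ ‖A s‖ := by
    intro s
    rw [norm_smul, Complex.norm_I, one_mul]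
    calc ‖A s * W s‖ ≤ ‖A s‖ * ‖W s‖ := Matrix.l2_opNorm_mul _ _
      _ ≤ ‖A s‖ := mul_le_of_le_one_right (norm_nonneg _) (hWnorm s)
  calc ‖(S t)ᴴ * timeEvol H t - 1‖ = ‖∫ s in (0:ℝ)..t, Complex.I • (A s * W s)‖ := by
        rw [hFTC, hW0]
    _ ≤ ∫ s in (0:ℝ)..t, ‖Complex.I • (A s * W s)‖ :=
        intervalIntegral.norm_integral_le_integral_norm ht
    _ ≤ ∫ s in (0:ℝ)..t, ‖A s‖ := by
        refine intervalIntegral.integral_mono_on ht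
          ((hW'cont.norm).intervalIntegrable 0 t) ((hAcont.norm).intervalIntegrable 0 t)
          fun s _ => hbound s
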